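/- arXiv:2103.05816 — 2 statements merged into one kernel-verified Lean document; each statement's English description precedes it below -/
import Mathlib

section
/- If G is a graph of order at least 7 with χ(G) = 3, then B(G) ≥ 3. -/
open Finset

variable {V : Type*}

/-- A proper coloring given as a function to ℕ. -/
def IsProperColoring (G : SimpleGraph V) (c : V → ℕ) : Prop :=
  ∀ ⦃u v⦄, G.Adj u v → c u ≠ c v

variable [Fintype V] [DecidableEq V]

/-- Two colorings use every color the same number of times. -/
def SameColorCounts (c c' : V → ℕ) : Prop :=
  ∀ k : ℕ, (univ.filter fun v => c v = k).card = (univ.filter fun v => c' v = k).card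

/-- The number of vertices on which two colorings differ. -/
def recolorCount (c c' : V → ℕ) : ℕ := (univ.filter fun v => c v ≠ c' v).card

/-- The ℕ-valued chromatic number. -/
noncomputable def chromNum (G : SimpleGraph V) : ℕ := G.chromaticNumber.toNat

/-- A proper coloring of `G` using exactly `χ(G)` colors. -/
noncomputable def IsOptimalColoring (G : SimpleGraph V) (f : V → ℕ) : Prop :=
  IsProperColoring G f ∧ (univ.image f).card = chromNum G

/-- The villainy of a coloring `c`: the least number of vertices that must be
recolored to obtain a proper coloring using each color as often as `c` does. -/
noncomputable def colVillainy (G : SimpleGraph V) (c : V → ℕ) : ℕ :=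
  sInf {n | ∃ c', IsProperColoring G c' ∧ SameColorCounts c c' ∧ recolorCount c c' = n}

/-- `c` is a permutation of the coloring `f`. -/
def IsPermutationOf (c f : V → ℕ) : Prop := ∃ σ : Equiv.Perm V, c = f ∘ σ

/-- The villainy of `G`: the maximum villainy over all permutations of optimal
proper colorings of `G`. -/
noncomputable def villainy (G : SimpleGraph V) : ℕ :=
  sSup {n | ∃ f c, IsOptimalColoring G f ∧ IsPermutationOf c f ∧ colVillainy G c = n}

set_option linter.unusedSectionVars false

section Aux

variable {G : SimpleGraph V}

lemma sameCounts_perm (f : V → ℕ) (σ : Equiv.Perm V) : SameColorCounts (f ∘ σ) f := by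
  intro k
  apply Finset.card_bij (fun a _ => σ a)
  · intro a ha
    simp only [mem_filter, mem_univ, true_and] at ha ⊢
    exact ha
  · intro a _ b _ h
    exact σ.injective h
  · intro b hb
    refine ⟨σ.symm b, ?_, by simp⟩
    simp only [mem_filter, mem_univ, true_and, Function.comp] at hb ⊢
    simpa using hb

lemma pair_filter_card (g : V → ℕ) (k : ℕ) (u w : V) (huw : u ≠ w) :
    (univ.filter fun v => g v = k).card =
      ((univ \ {u, w} : Finset V).filter fun v => g v = k).card +
        ((if g u = k then 1 else 0) + (if g w = k then 1 else 0)) := by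
  have hsplit : (univ : Finset V) = (univ \ {u, w}) ∪ {u, w} := by
    rw [Finset.sdiff_union_self_eq_union]
    simp
  have hdisj : Disjoint ((univ \ {u, w} : Finset V).filter fun v => g v = k)
      (({u, w} : Finset V).filter fun v => g v = k) := by
    apply Finset.disjoint_filter_filter
    exact Finset.sdiff_disjoint
  conv_lhs => rw [hsplit]
  rw [Finset.filter_union, Finset.card_union_of_disjoint hdisj]
  congr 1
  rw [show ({u, w} : Finset V) = insert u {w} from rfl, Finset.filter_insert,
    Finset.filter_singleton]
  by_cases h1 : g u = k <;> by_cases h2 : g w = k <;>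
    simp [h1, h2, Finset.card_insert_of_notMem, huw]


lemma villainy_core (G : SimpleGraph V) (f c : V → ℕ)
    (hopt : IsOptimalColoring G f) (σ : Equiv.Perm V) (hc : c = f ∘ σ)
    (himp : ¬ IsProperColoring G c)
    (hblock : ∀ u w : V, u ≠ w → c u ≠ c w →
      ∃ a b, G.Adj a b ∧ a ≠ u ∧ a ≠ w ∧ b ≠ u ∧ b ≠ w ∧ c a = c b) :
    3 ≤ villainy G := by
  have hcnt : SameColorCounts c f := by rw [hc]; exact sameCounts_perm f σ
  -- the inner set is nonempty
  have hfmem : recolorCount c f ∈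
      {n | ∃ c', IsProperColoring G c' ∧ SameColorCounts c c' ∧ recolorCount c c' = n} :=
    ⟨f, hopt.1, hcnt, rfl⟩
  have hvmem : colVillainy G c ∈
      {n | ∃ c', IsProperColoring G c' ∧ SameColorCounts c c' ∧ recolorCount c c' = n} :=
    Nat.sInf_mem ⟨_, hfmem⟩
  obtain ⟨c', hc'p, hc'cnt, hc'rec⟩ := hvmem
  -- show 3 ≤ colVillainy G c
  have h3 : 3 ≤ colVillainy G c := by
    rw [← hc'rec]
    by_contra hlt
    push_neg at hlt
    set D := univ.filter (fun v => c v ≠ c' v) with hD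
    have hDcard : D.card < 3 := hlt
    interval_cases h : D.card
    · -- card 0 : c = c'
      have : c = c' := by
        funext v
        by_contra hv
        have : v ∈ D := by simp [hD, hv]
        rw [Finset.card_eq_zero] at h
        simp [h] at this
      exact himp (this ▸ hc'p)
    · -- card 1
      rw [Finset.card_eq_one] at h
      obtain ⟨v, hv⟩ := h
      have hvmemD : v ∈ D := by rw [hv]; exact Finset.mem_singleton_self v
      have hvne : c v ≠ c' v := by simpa [hD] using hvmemD
      have hout : ∀ x, x ≠ v → c x = c' x := by
        intro x hx
        by_contra hxx
        have : x ∈ D := by simp [hD, hxx]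
        rw [hv, Finset.mem_singleton] at this
        exact hx this
      have hk := hc'cnt (c v)
      -- filter c' = (filter c).erase v
      have : (univ.filter fun x => c' x = c v) = (univ.filter fun x => c x = c v).erase v := by
        ext x
        simp only [Finset.mem_filter, Finset.mem_univ, true_and, Finset.mem_erase]
        constructor
        · intro hx
          have hxv : x ≠ v := by rintro rfl; exact hvne hx.symm
          exact ⟨hxv, by rw [hout x hxv]; exact hx⟩
        · rintro ⟨hxv, hx⟩
          rw [← hout x hxv]; exact hx
      rw [this, Finset.card_erase_of_mem (by simp)] at hk
      have hpos : 0 < (univ.filter fun x => c x = c v).card :=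
        Finset.card_pos.mpr ⟨v, by simp⟩
      omega
    · -- card 2
      rw [Finset.card_eq_two] at h
      obtain ⟨u, w, huw, hDuw⟩ := h
      have hu : c u ≠ c' u := by
        have : u ∈ D := by rw [hDuw]; simp
        simpa [hD] using this
      have hw : c w ≠ c' w := by
        have : w ∈ D := by rw [hDuw]; simp
        simpa [hD] using this
      have hout : ∀ x, x ≠ u → x ≠ w → c x = c' x := by
        intro x hx1 hx2
        by_contra hxx
        have : x ∈ D := by simp [hD, hxx]
        rw [hDuw] at this
        simp only [Finset.mem_insert, Finset.mem_singleton] at this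
        tauto
      have hmid : ∀ k, ((univ \ {u, w} : Finset V).filter fun v => c v = k).card =
          ((univ \ {u, w} : Finset V).filter fun v => c' v = k).card := by
        intro k
        congr 1
        apply Finset.filter_congr
        intro x hx
        simp only [Finset.mem_sdiff, Finset.mem_univ, true_and, Finset.mem_insert,
          Finset.mem_singleton] at hx
        push_neg at hx
        rw [hout x hx.1 hx.2]
      have key : ∀ k, (if c u = k then 1 else 0) + (if c w = k then 1 else 0) =
          (if c' u = k then 1 else 0) + (if c' w = k then 1 else 0) := by
        intro k
        have h1 := pair_filter_card c k u w huw
        have h2 := pair_filter_card c' k u w huw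
        have h3 := hc'cnt k
        rw [h1, h2, hmid k] at h3
        omega
      -- derive the swap structure
      have hcwu : c' w = c u ∧ c w ≠ c u := by
        have := key (c u)
        by_cases hx : c' w = c u <;> by_cases hy : c w = c u <;>
          simp [hx, hy, hu, Ne.symm, (show c' u ≠ c u from Ne.symm hu)] at this ⊢ <;> tauto
      have hcuw : c' u = c w ∧ c u ≠ c w := by
        have := key (c w)
        by_cases hx : c' u = c w <;> by_cases hy : c u = c w <;>
          simp [hx, hy, hw, (show c' w ≠ c w from Ne.symm hw)] at this ⊢ <;> tauto
      obtain ⟨a, b, hab, hau, haw, hbu, hbw, hmono⟩ := hblock u w huw hcuw.2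
      have : c' a = c' b := by
        rw [← hout a hau haw, ← hout b hbu hbw]; exact hmono
      exact hc'p hab this
  -- conclude via sSup
  have hSmem : colVillainy G c ∈
      {n | ∃ f c, IsOptimalColoring G f ∧ IsPermutationOf c f ∧ colVillainy G c = n} :=
    ⟨f, c, hopt, ⟨σ, hc⟩, rfl⟩
  have hbdd : BddAbove {n | ∃ f c, IsOptimalColoring G f ∧ IsPermutationOf c f ∧ colVillainy G c = n} := by
    refine ⟨Fintype.card V, ?_⟩
    rintro n ⟨f₂, c₂, hopt₂, ⟨σ₂, hc₂⟩, rfl⟩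
    have hcnt₂ : SameColorCounts c₂ f₂ := by rw [hc₂]; exact sameCounts_perm f₂ σ₂
    have : colVillainy G c₂ ≤ recolorCount c₂ f₂ :=
      Nat.sInf_le ⟨f₂, hopt₂.1, hcnt₂, rfl⟩
    calc colVillainy G c₂ ≤ recolorCount c₂ f₂ := this
      _ ≤ Fintype.card V := by
          unfold recolorCount
          exact le_trans (Finset.card_filter_le _ _) (le_of_eq (Finset.card_univ))
  exact le_trans h3 (le_csSup hbdd hSmem)



/-- paint all of S with color κ via a permutation of f -/
lemma exists_perm_paint (f : V → ℕ) (κ : ℕ) (S : Finset V)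
    (h : S.card ≤ (univ.filter fun v => f v = κ).card) :
    ∃ σ : Equiv.Perm V, ∀ v ∈ S, f (σ v) = κ := by
  classical
  set F := univ.filter fun v => f v = κ with hF
  set S' := S \ F with hS'
  set F' := F \ S with hF'
  have e1 : S'.card + (S ∩ F).card = S.card := Finset.card_sdiff_add_card_inter S F
  have e2 : F'.card + (F ∩ S).card = F.card := Finset.card_sdiff_add_card_inter F S
  have e3 : (S ∩ F).card = (F ∩ S).card := by rw [Finset.inter_comm]
  have hcard : S'.card ≤ F'.card := by omega
  obtain ⟨T', hT'sub, hT'card⟩ := Finset.exists_subset_card_eq hcard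
  have hdisj : ∀ x, x ∈ S' → x ∈ T' → False := by
    intro x hx1 hx2
    have := hT'sub hx2
    rw [hF', Finset.mem_sdiff] at this
    rw [hS', Finset.mem_sdiff] at hx1
    exact this.2 hx1.1
  let e : {x // x ∈ S'} ≃ {x // x ∈ T'} := Finset.equivOfCardEq (by rw [hT'card])
  let g : V → V := fun v =>
    if hv : v ∈ S' then (e ⟨v, hv⟩ : V)
    else if hv : v ∈ T' then (e.symm ⟨v, hv⟩ : V)
    else v
  have hgS' : ∀ (v) (hv : v ∈ S'), g v = (e ⟨v, hv⟩ : V) := by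
    intro v hv; simp only [g, dif_pos hv]
  have hgT' : ∀ (v) (hv : v ∈ T'), g v = (e.symm ⟨v, hv⟩ : V) := by
    intro v hv
    have hvS' : v ∉ S' := fun hs => hdisj v hs hv
    simp only [g, dif_neg hvS', dif_pos hv]
  have hgid : ∀ v, v ∉ S' → v ∉ T' → g v = v := by
    intro v h1 h2; simp only [g, dif_neg h1, dif_neg h2]
  have hinv : Function.Involutive g := by
    intro v
    by_cases hv : v ∈ S'
    · rw [hgS' v hv]
      have hm : (e ⟨v, hv⟩ : V) ∈ T' := (e ⟨v, hv⟩).2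
      rw [hgT' _ hm]
      simp
    · by_cases hv2 : v ∈ T'
      · rw [hgT' v hv2]
        have hm : (e.symm ⟨v, hv2⟩ : V) ∈ S' := (e.symm ⟨v, hv2⟩).2
        rw [hgS' _ hm]
        simp
      · rw [hgid v hv hv2, hgid v hv hv2]
  refine ⟨hinv.toPerm, ?_⟩
  intro v hvS
  show f (g v) = κ
  by_cases hv : v ∈ S'
  · rw [hgS' v hv]
    have hm : (e ⟨v, hv⟩ : V) ∈ T' := (e ⟨v, hv⟩).2
    have := hT'sub hm
    rw [hF', Finset.mem_sdiff, hF, Finset.mem_filter] at this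
    exact this.1.2
  · have hvT' : v ∉ T' := by
      intro hm
      have := hT'sub hm
      rw [hF', Finset.mem_sdiff] at this
      exact this.2 hvS
    rw [hgid v hv hvT']
    have hvF : v ∈ F := by
      by_contra hvF
      exact hv (by rw [hS', Finset.mem_sdiff]; exact ⟨hvS, hvF⟩)
    rw [hF, Finset.mem_filter] at hvF
    exact hvF.2

lemma three_edges_hit {α : Type*} (a1 b1 a2 b2 a3 b3 u w : α)
    (n1 : a1 ≠ b1) (n2 : a2 ≠ b2) (n3 : a3 ≠ b3)
    (d12 : a1 ≠ a2) (d13 : a1 ≠ b2) (d14 : a1 ≠ a3) (d15 : a1 ≠ b3)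
    (d22 : b1 ≠ a2) (d23 : b1 ≠ b2) (d24 : b1 ≠ a3) (d25 : b1 ≠ b3)
    (d33 : a2 ≠ a3) (d34 : a2 ≠ b3) (d43 : b2 ≠ a3) (d44 : b2 ≠ b3)
    (m1 : a1 = u ∨ a1 = w ∨ b1 = u ∨ b1 = w)
    (m2 : a2 = u ∨ a2 = w ∨ b2 = u ∨ b2 = w)
    (m3 : a3 = u ∨ a3 = w ∨ b3 = u ∨ b3 = w) : False := by
  rcases m1 with rfl | rfl | rfl | rfl <;> rcases m2 with h' | h' | h' | h' <;>
    rcases m3 with h'' | h'' | h'' | h'' <;> simp_all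

lemma pat_two (G : SimpleGraph V) (f c : V → ℕ)
    (hopt : IsOptimalColoring G f) (σ : Equiv.Perm V) (hc : c = f ∘ σ)
    (p q r s : V) (hpq : G.Adj p q) (hrs : G.Adj r s)
    (hpr : p ≠ r) (hps : p ≠ s) (hqr : q ≠ r) (hqs : q ≠ s)
    (h1 : c p = c q) (h2 : c r = c s) (h3 : c p = c r) :
    3 ≤ villainy G := by
  have hpqne := hpq.ne
  have hrsne := hrs.ne
  apply villainy_core G f c hopt σ hc
  · intro hprop
    exact hprop hpq h1
  · intro u w hne hcne
    have htouch : ¬((p = u ∨ p = w ∨ q = u ∨ q = w) ∧ (r = u ∨ r = w ∨ s = u ∨ s = w)) := by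
      rintro ⟨(rfl | rfl | rfl | rfl), (h' | h' | h' | h')⟩ <;> subst h' <;> simp_all
    rcases not_and_or.mp htouch with h | h
    · push_neg at h
      exact ⟨p, q, hpq, h.1, h.2.1, h.2.2.1, h.2.2.2, h1⟩
    · push_neg at h
      exact ⟨r, s, hrs, h.1, h.2.1, h.2.2.1, h.2.2.2, h2⟩

lemma pat_tri (G : SimpleGraph V) (f c : V → ℕ)
    (hopt : IsOptimalColoring G f) (σ : Equiv.Perm V) (hc : c = f ∘ σ)
    (p q r : V) (hpq : G.Adj p q) (hpr : G.Adj p r) (hqr : G.Adj q r)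
    (h1 : c p = c q) (h2 : c q = c r) :
    3 ≤ villainy G := by
  have hpqne := hpq.ne
  have hprne := hpr.ne
  have hqrne := hqr.ne
  apply villainy_core G f c hopt σ hc
  · intro hprop
    exact hprop hpq h1
  · intro u w hne hcne
    by_cases hP : p = u ∨ p = w
    · have hQ : q ≠ u ∧ q ≠ w := by
        constructor <;> rintro rfl <;> rcases hP with rfl | rfl <;> simp_all
      have hR : r ≠ u ∧ r ≠ w := by
        constructor <;> rintro rfl <;> rcases hP with rfl | rfl <;> simp_all
      exact ⟨q, r, hqr, hQ.1, hQ.2, hR.1, hR.2, h2⟩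
    · by_cases hQ : q = u ∨ q = w
      · push_neg at hP
        have hR : r ≠ u ∧ r ≠ w := by
          constructor <;> rintro rfl <;> rcases hQ with rfl | rfl <;> simp_all
        exact ⟨p, r, hpr, hP.1, hP.2, hR.1, hR.2, h1.trans h2⟩
      · push_neg at hP
        push_neg at hQ
        exact ⟨p, q, hpq, hP.1, hP.2, hQ.1, hQ.2, h1⟩

lemma pat_three (G : SimpleGraph V) (f c : V → ℕ)
    (hopt : IsOptimalColoring G f) (σ : Equiv.Perm V) (hc : c = f ∘ σ)
    (a1 b1 a2 b2 a3 b3 : V)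
    (he1 : G.Adj a1 b1) (he2 : G.Adj a2 b2) (he3 : G.Adj a3 b3)
    (d12 : a1 ≠ a2) (d13 : a1 ≠ b2) (d14 : a1 ≠ a3) (d15 : a1 ≠ b3)
    (d22 : b1 ≠ a2) (d23 : b1 ≠ b2) (d24 : b1 ≠ a3) (d25 : b1 ≠ b3)
    (d33 : a2 ≠ a3) (d34 : a2 ≠ b3) (d43 : b2 ≠ a3) (d44 : b2 ≠ b3)
    (h1 : c a1 = c b1) (h2 : c a2 = c b2) (h3 : c a3 = c b3) :
    3 ≤ villainy G := by
  have n1 := he1.ne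
  have n2 := he2.ne
  have n3 := he3.ne
  apply villainy_core G f c hopt σ hc
  · intro hprop
    exact hprop he1 h1
  · intro u w hne hcne
    by_cases t1 : a1 ≠ u ∧ a1 ≠ w ∧ b1 ≠ u ∧ b1 ≠ w
    · exact ⟨a1, b1, he1, t1.1, t1.2.1, t1.2.2.1, t1.2.2.2, h1⟩
    by_cases t2 : a2 ≠ u ∧ a2 ≠ w ∧ b2 ≠ u ∧ b2 ≠ w
    · exact ⟨a2, b2, he2, t2.1, t2.2.1, t2.2.2.1, t2.2.2.2, h2⟩
    by_cases t3 : a3 ≠ u ∧ a3 ≠ w ∧ b3 ≠ u ∧ b3 ≠ w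
    · exact ⟨a3, b3, he3, t3.1, t3.2.1, t3.2.2.1, t3.2.2.2, h3⟩
    exfalso
    push_neg at t1 t2 t3
    have mk : ∀ x y : V, (x ≠ u → x ≠ w → y ≠ u → y = w) → (x = u ∨ x = w ∨ y = u ∨ y = w) := by
      intro x y hxy
      by_cases x1 : x = u
      · exact Or.inl x1
      by_cases x2 : x = w
      · exact Or.inr (Or.inl x2)
      by_cases x3 : y = u
      · exact Or.inr (Or.inr (Or.inl x3))
      · exact Or.inr (Or.inr (Or.inr (hxy x1 x2 x3)))
    have m1 := mk a1 b1 t1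
    have m2 := mk a2 b2 t2
    have m3 := mk a3 b3 t3
    exact three_edges_hit a1 b1 a2 b2 a3 b3 u w n1 n2 n3 d12 d13 d14 d15 d22 d23 d24 d25 d33 d34 d43 d44 m1 m2 m3

lemma chromNum_facts (G : SimpleGraph V) (hchi : chromNum G = 3) :
    G.Colorable 3 ∧ (∀ g : V → ℕ, (∀ v, g v < 2) → ¬ IsProperColoring G g) := by
  have hcol : G.Colorable (chromNum G) := G.colorable_chromaticNumber_of_fintype
  rw [hchi] at hcol
  refine ⟨hcol, ?_⟩
  intro g hg hprop
  have h2 : G.Colorable 2 := by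
    refine ⟨SimpleGraph.Coloring.mk (fun v => (⟨g v, hg v⟩ : Fin 2)) ?_⟩
    intro a b hab
    intro hcontra
    exact hprop hab (congrArg Fin.val hcontra)
  have hle : G.chromaticNumber ≤ 2 := h2.chromaticNumber_le
  have : chromNum G ≤ 2 := by
    unfold chromNum
    calc G.chromaticNumber.toNat ≤ ((2 : ℕ) : ℕ∞).toNat := by
          apply ENat.toNat_le_toNat hle
          simp
      _ = 2 := by simp
  omega

/-- a nice optimal coloring: values < 3 and all three fibers inhabited -/
lemma exists_nice_coloring (G : SimpleGraph V) (hchi : chromNum G = 3) :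
    ∃ f : V → ℕ, IsProperColoring G f ∧ (∀ v, f v < 3) ∧
      (∀ k, k < 3 → ∃ v, f v = k) := by
  obtain ⟨hcol, hnot2⟩ := chromNum_facts G hchi
  obtain ⟨C⟩ := hcol
  refine ⟨fun v => (C v : ℕ), ?_, fun v => (C v).isLt, ?_⟩
  · intro a b hab hcontra
    exact C.valid hab (Fin.ext hcontra)
  · intro k hk
    by_contra hempty
    push_neg at hempty
    apply hnot2 (fun v => if (C v : ℕ) = (k + 1) % 3 then 0 else 1)
    · intro v
      split <;> omega
    · intro a b hab hcontra
      have ha := (C a).isLt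
      have hb := (C b).isLt
      have hane := hempty a
      have hbne := hempty b
      have hne : (C a : ℕ) ≠ (C b : ℕ) := fun h => C.valid hab (Fin.ext h)
      by_cases h1 : (C a : ℕ) = (k + 1) % 3 <;> by_cases h2 : (C b : ℕ) = (k + 1) % 3 <;>
        simp [h1, h2] at hcontra <;> omega

lemma nice_isOptimal (G : SimpleGraph V) (hchi : chromNum G = 3) (f : V → ℕ)
    (hp : IsProperColoring G f) (hlt : ∀ v, f v < 3) (hfib : ∀ k, k < 3 → ∃ v, f v = k) :
    IsOptimalColoring G f := by
  refine ⟨hp, ?_⟩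
  have himage : univ.image f = ({0, 1, 2} : Finset ℕ) := by
    apply Finset.Subset.antisymm
    · intro k hk
      rw [Finset.mem_image] at hk
      obtain ⟨v, _, rfl⟩ := hk
      have := hlt v
      simp only [Finset.mem_insert, Finset.mem_singleton]
      omega
    · intro k hk
      simp only [Finset.mem_insert, Finset.mem_singleton] at hk
      have hk3 : k < 3 := by rcases hk with rfl | rfl | rfl <;> omega
      obtain ⟨v, hv⟩ := hfib k hk3
      rw [Finset.mem_image]
      exact ⟨v, Finset.mem_univ v, hv⟩
  rw [himage, hchi]
  rfl

lemma fiber_sum (f : V → ℕ) (hlt : ∀ v, f v < 3) :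
    (univ.filter fun v => f v = 0).card + (univ.filter fun v => f v = 1).card +
      (univ.filter fun v => f v = 2).card = Fintype.card V := by
  classical
  have h1 : (univ.filter fun v => f v = 0).card + (univ.filter fun v => ¬ f v = 0).card
      = Fintype.card V := by
    rw [Finset.card_filter_add_card_filter_not]
    rfl
  have h2 : ((univ.filter fun v => ¬ f v = 0).filter fun v => f v = 1).card +
      ((univ.filter fun v => ¬ f v = 0).filter fun v => ¬ f v = 1).card
      = (univ.filter fun v => ¬ f v = 0).card := by
    rw [Finset.card_filter_add_card_filter_not]
  have e1 : ((univ.filter fun v => ¬ f v = 0).filter fun v => f v = 1) =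
      (univ.filter fun v => f v = 1) := by
    rw [Finset.filter_filter]
    apply Finset.filter_congr
    intro x _
    constructor
    · rintro ⟨_, h⟩; exact h
    · intro h; exact ⟨by omega, h⟩
  have e2 : ((univ.filter fun v => ¬ f v = 0).filter fun v => ¬ f v = 1) =
      (univ.filter fun v => f v = 2) := by
    rw [Finset.filter_filter]
    apply Finset.filter_congr
    intro x _
    have := hlt x
    constructor
    · rintro ⟨h1', h2'⟩; omega
    · intro h; constructor <;> omega
  rw [e1, e2] at h2
  omega

lemma cons_pairs (G : SimpleGraph V) (f : V → ℕ) (hopt : IsOptimalColoring G f) (κ : ℕ)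
    (hbig : 4 ≤ (univ.filter fun v => f v = κ).card)
    (p q r s : V) (hpq : G.Adj p q) (hrs : G.Adj r s)
    (hpr : p ≠ r) (hps : p ≠ s) (hqr : q ≠ r) (hqs : q ≠ s) :
    3 ≤ villainy G := by
  have h4 : ({p, q, r, s} : Finset V).card ≤ 4 := by
    have h3 : (insert q (insert r {s}) : Finset V).card ≤ 3 := by
      have h2 : (insert r {s} : Finset V).card ≤ 2 :=
        le_trans (Finset.card_insert_le _ _) (by simp)
      exact le_trans (Finset.card_insert_le _ _) (by omega)
    exact le_trans (Finset.card_insert_le _ _) (by omega)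
  obtain ⟨σ, hσ⟩ := exists_perm_paint f κ {p, q, r, s} (le_trans h4 hbig)
  have hcp : f (σ p) = κ := hσ p (by simp)
  have hcq : f (σ q) = κ := hσ q (by simp)
  have hcr : f (σ r) = κ := hσ r (by simp)
  have hcs : f (σ s) = κ := hσ s (by simp)
  exact pat_two G f (f ∘ σ) hopt σ rfl p q r s hpq hrs hpr hps hqr hqs
    (by simp [Function.comp, hcp, hcq]) (by simp [Function.comp, hcr, hcs])
    (by simp [Function.comp, hcp, hcr])

lemma cons_triangle (G : SimpleGraph V) (f : V → ℕ) (hopt : IsOptimalColoring G f) (κ : ℕ)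
    (hbig : 3 ≤ (univ.filter fun v => f v = κ).card)
    (p q r : V) (hpq : G.Adj p q) (hpr : G.Adj p r) (hqr : G.Adj q r) :
    3 ≤ villainy G := by
  have h3 : ({p, q, r} : Finset V).card ≤ 3 := by
    have h2 : (insert q {r} : Finset V).card ≤ 2 :=
      le_trans (Finset.card_insert_le _ _) (by simp)
    exact le_trans (Finset.card_insert_le _ _) (by omega)
  obtain ⟨σ, hσ⟩ := exists_perm_paint f κ {p, q, r} (le_trans h3 hbig)
  have hcp : f (σ p) = κ := hσ p (by simp)
  have hcq : f (σ q) = κ := hσ q (by simp)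
  have hcr : f (σ r) = κ := hσ r (by simp)
  exact pat_tri G f (f ∘ σ) hopt σ rfl p q r hpq hpr hqr
    (by simp [Function.comp, hcp, hcq]) (by simp [Function.comp, hcq, hcr])

section Disp

variable (G : SimpleGraph V) (f : V → ℕ)

lemma swap2_eval (x1 y1 x2 y2 v : V) (h1 : v ≠ x1) (h2 : v ≠ y1) (h3 : v ≠ x2) (h4 : v ≠ y2) :
    (Equiv.swap x1 y1 * Equiv.swap x2 y2) v = v := by
  rw [Equiv.Perm.mul_apply, Equiv.swap_apply_of_ne_of_ne h3 h4,
    Equiv.swap_apply_of_ne_of_ne h1 h2]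

/-- Case: e1 and e2 have the same (oriented) colors, and b3 has the missing color. -/
lemma disp_oriented (hopt : IsOptimalColoring G f) (hlt : ∀ v, f v < 3)
    (a1 b1 a2 b2 a3 b3 : V)
    (he1 : G.Adj a1 b1) (he2 : G.Adj a2 b2) (he3 : G.Adj a3 b3)
    (d12 : a1 ≠ a2) (d13 : a1 ≠ b2) (d14 : a1 ≠ a3) (d15 : a1 ≠ b3)
    (d22 : b1 ≠ a2) (d23 : b1 ≠ b2) (d24 : b1 ≠ a3) (d25 : b1 ≠ b3)
    (d33 : a2 ≠ a3) (d34 : a2 ≠ b3) (d43 : b2 ≠ a3) (d44 : b2 ≠ b3)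
    (hfa : f a1 = f a2) (hfb : f b1 = f b2)
    (hbz : f b3 = 3 - f a1 - f b1)
    (hz2 : 2 ≤ (univ.filter fun v => f v = 3 - f a1 - f b1).card) :
    3 ≤ villainy G := by
  have hne1 : f a1 ≠ f b1 := hopt.1 he1
  have hne3 : f a3 ≠ f b3 := hopt.1 he3
  have hl1 := hlt a1
  have hl2 := hlt b1
  obtain ⟨c', hc'mem, hc'ne⟩ := Finset.exists_mem_ne
    (s := univ.filter fun v => f v = 3 - f a1 - f b1) (by omega) b3
  rw [Finset.mem_filter] at hc'mem
  have hc'z : f c' = 3 - f a1 - f b1 := hc'mem.2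
  have hca1 : c' ≠ a1 := by rintro rfl; omega
  have hcb1 : c' ≠ b1 := by rintro rfl; omega
  have hca2 : c' ≠ a2 := by rintro rfl; omega
  have hcb2 : c' ≠ b2 := by rintro rfl; rw [hc'z] at hfb; omega
  have hca3 : c' ≠ a3 := by rintro rfl; omega
  set σ := Equiv.swap b1 a2 * Equiv.swap a3 c' with hσ
  have ea1 : σ a1 = a1 := swap2_eval _ _ _ _ _ (he1.ne) d12 d14 hca1.symm
  have eb1 : σ b1 = a2 := by
    rw [hσ, Equiv.Perm.mul_apply, Equiv.swap_apply_of_ne_of_ne d24 hcb1.symm,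
      Equiv.swap_apply_left]
  have ea2 : σ a2 = b1 := by
    rw [hσ, Equiv.Perm.mul_apply, Equiv.swap_apply_of_ne_of_ne d33 hca2.symm,
      Equiv.swap_apply_right]
  have eb2 : σ b2 = b2 := swap2_eval _ _ _ _ _ d23.symm he2.ne.symm d43 hcb2.symm
  have ea3 : σ a3 = c' := by
    rw [hσ, Equiv.Perm.mul_apply, Equiv.swap_apply_left,
      Equiv.swap_apply_of_ne_of_ne hcb1 hca2]
  have eb3 : σ b3 = b3 := swap2_eval _ _ _ _ _ d25.symm d34.symm he3.ne.symm hc'ne.symm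
  apply pat_three G f (f ∘ σ) hopt σ rfl a1 b1 a2 b2 a3 b3 he1 he2 he3
    d12 d13 d14 d15 d22 d23 d24 d25 d33 d34 d43 d44
  · show f (σ a1) = f (σ b1)
    rw [ea1, eb1, hfa]
  · show f (σ a2) = f (σ b2)
    rw [ea2, eb2, hfb]
  · show f (σ a3) = f (σ b3)
    rw [ea3, eb3, hc'z, hbz]

/-- Case: e1 and e2 have the same (oriented) colors; general third edge. -/
lemma disp_two_same (hopt : IsOptimalColoring G f) (hlt : ∀ v, f v < 3)
    (hfib2 : ∀ k, k < 3 → 2 ≤ (univ.filter fun v => f v = k).card)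
    (a1 b1 a2 b2 a3 b3 : V)
    (he1 : G.Adj a1 b1) (he2 : G.Adj a2 b2) (he3 : G.Adj a3 b3)
    (d12 : a1 ≠ a2) (d13 : a1 ≠ b2) (d14 : a1 ≠ a3) (d15 : a1 ≠ b3)
    (d22 : b1 ≠ a2) (d23 : b1 ≠ b2) (d24 : b1 ≠ a3) (d25 : b1 ≠ b3)
    (d33 : a2 ≠ a3) (d34 : a2 ≠ b3) (d43 : b2 ≠ a3) (d44 : b2 ≠ b3)
    (hfa : f a1 = f a2) (hfb : f b1 = f b2) :
    3 ≤ villainy G := by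
  have hne1 : f a1 ≠ f b1 := hopt.1 he1
  have hne3 : f a3 ≠ f b3 := hopt.1 he3
  have hl1 := hlt a1
  have hl2 := hlt b1
  have hl3 := hlt a3
  have hl4 := hlt b3
  have hz3 : 3 - f a1 - f b1 < 3 := by omega
  have hz2 := hfib2 _ hz3
  by_cases hbz : f b3 = 3 - f a1 - f b1
  · exact disp_oriented G f hopt hlt a1 b1 a2 b2 a3 b3 he1 he2 he3
      d12 d13 d14 d15 d22 d23 d24 d25 d33 d34 d43 d44 hfa hfb hbz hz2
  by_cases haz : f a3 = 3 - f a1 - f b1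
  · exact disp_oriented G f hopt hlt a1 b1 a2 b2 b3 a3 he1 he2 he3.symm
      d12 d13 d15 d14 d22 d23 d25 d24 d34 d33 d44 d43 hfa hfb haz hz2
  · -- both endpoints of e3 miss color z : recolor both
    obtain ⟨c1, hc1mem, c2, hc2mem, hc12⟩ := Finset.one_lt_card.mp (by omega : 1 <
      (univ.filter fun v => f v = 3 - f a1 - f b1).card)
    rw [Finset.mem_filter] at hc1mem hc2mem
    have hc1z : f c1 = 3 - f a1 - f b1 := hc1mem.2
    have hc2z : f c2 = 3 - f a1 - f b1 := hc2mem.2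
    have hc1a1 : c1 ≠ a1 := by rintro rfl; omega
    have hc1b1 : c1 ≠ b1 := by rintro rfl; omega
    have hc1a2 : c1 ≠ a2 := by rintro rfl; omega
    have hc1b2 : c1 ≠ b2 := by rintro rfl; rw [hc1z] at hfb; omega
    have hc1a3 : c1 ≠ a3 := by rintro rfl; omega
    have hc1b3 : c1 ≠ b3 := by rintro rfl; omega
    have hc2a1 : c2 ≠ a1 := by rintro rfl; omega
    have hc2b1 : c2 ≠ b1 := by rintro rfl; omega
    have hc2a2 : c2 ≠ a2 := by rintro rfl; omega
    have hc2b2 : c2 ≠ b2 := by rintro rfl; rw [hc2z] at hfb; omega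
    have hc2a3 : c2 ≠ a3 := by rintro rfl; omega
    have hc2b3 : c2 ≠ b3 := by rintro rfl; omega
    set σ := Equiv.swap b1 a2 * (Equiv.swap a3 c1 * Equiv.swap b3 c2) with hσ
    have ea1 : σ a1 = a1 := by
      rw [hσ, Equiv.Perm.mul_apply, Equiv.Perm.mul_apply,
        Equiv.swap_apply_of_ne_of_ne d15 hc2a1.symm,
        Equiv.swap_apply_of_ne_of_ne d14 hc1a1.symm,
        Equiv.swap_apply_of_ne_of_ne he1.ne d12]
    have eb1 : σ b1 = a2 := by
      rw [hσ, Equiv.Perm.mul_apply, Equiv.Perm.mul_apply,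
        Equiv.swap_apply_of_ne_of_ne d25 hc2b1.symm,
        Equiv.swap_apply_of_ne_of_ne d24 hc1b1.symm,
        Equiv.swap_apply_left]
    have ea2 : σ a2 = b1 := by
      rw [hσ, Equiv.Perm.mul_apply, Equiv.Perm.mul_apply,
        Equiv.swap_apply_of_ne_of_ne d34 hc2a2.symm,
        Equiv.swap_apply_of_ne_of_ne d33 hc1a2.symm,
        Equiv.swap_apply_right]
    have eb2 : σ b2 = b2 := by
      rw [hσ, Equiv.Perm.mul_apply, Equiv.Perm.mul_apply,
        Equiv.swap_apply_of_ne_of_ne d44 hc2b2.symm,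
        Equiv.swap_apply_of_ne_of_ne d43 hc1b2.symm,
        Equiv.swap_apply_of_ne_of_ne d23.symm he2.ne.symm]
    have ea3 : σ a3 = c1 := by
      rw [hσ, Equiv.Perm.mul_apply, Equiv.Perm.mul_apply,
        Equiv.swap_apply_of_ne_of_ne he3.ne hc2a3.symm,
        Equiv.swap_apply_left,
        Equiv.swap_apply_of_ne_of_ne hc1b1 hc1a2]
    have eb3 : σ b3 = c2 := by
      rw [hσ, Equiv.Perm.mul_apply, Equiv.Perm.mul_apply,
        Equiv.swap_apply_left,
        Equiv.swap_apply_of_ne_of_ne hc2a3.symm.symm hc12.symm,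
        Equiv.swap_apply_of_ne_of_ne hc2b1 hc2a2]
    apply pat_three G f (f ∘ σ) hopt σ rfl a1 b1 a2 b2 a3 b3 he1 he2 he3
      d12 d13 d14 d15 d22 d23 d24 d25 d33 d34 d43 d44
    · show f (σ a1) = f (σ b1)
      rw [ea1, eb1, hfa]
    · show f (σ a2) = f (σ b2)
      rw [ea2, eb2, hfb]
    · show f (σ a3) = f (σ b3)
      rw [ea3, eb3, hc1z, hc2z]

/-- Case: the three edges have pairwise different color pairs (suitably oriented). -/
lemma disp_all_diff (hopt : IsOptimalColoring G f)
    (a1 b1 a2 b2 a3 b3 : V)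
    (he1 : G.Adj a1 b1) (he2 : G.Adj a2 b2) (he3 : G.Adj a3 b3)
    (d12 : a1 ≠ a2) (d13 : a1 ≠ b2) (d14 : a1 ≠ a3) (d15 : a1 ≠ b3)
    (d22 : b1 ≠ a2) (d23 : b1 ≠ b2) (d24 : b1 ≠ a3) (d25 : b1 ≠ b3)
    (d33 : a2 ≠ a3) (d34 : a2 ≠ b3) (d43 : b2 ≠ a3) (d44 : b2 ≠ b3)
    (h1 : f a1 = f a2) (h2 : f b1 = f a3) (h3 : f b2 = f b3) :
    3 ≤ villainy G := by
  set σ := Equiv.swap b1 a2 * Equiv.swap a2 b3 with hσ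
  have ea1 : σ a1 = a1 := swap2_eval _ _ _ _ _ he1.ne d12 d12 d15
  have eb1 : σ b1 = a2 := by
    rw [hσ, Equiv.Perm.mul_apply, Equiv.swap_apply_of_ne_of_ne d22 d25,
      Equiv.swap_apply_left]
  have ea2 : σ a2 = b3 := by
    rw [hσ, Equiv.Perm.mul_apply, Equiv.swap_apply_left,
      Equiv.swap_apply_of_ne_of_ne d25.symm d34.symm]
  have eb2 : σ b2 = b2 := swap2_eval _ _ _ _ _ d23.symm he2.ne.symm he2.ne.symm d44
  have ea3 : σ a3 = a3 := swap2_eval _ _ _ _ _ d24.symm d33.symm d33.symm he3.ne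
  have eb3 : σ b3 = b1 := by
    rw [hσ, Equiv.Perm.mul_apply, Equiv.swap_apply_right, Equiv.swap_apply_right]
  apply pat_three G f (f ∘ σ) hopt σ rfl a1 b1 a2 b2 a3 b3 he1 he2 he3
    d12 d13 d14 d15 d22 d23 d24 d25 d33 d34 d43 d44
  · show f (σ a1) = f (σ b1)
    rw [ea1, eb1, h1]
  · show f (σ a2) = f (σ b2)
    rw [ea2, eb2, h3]
  · show f (σ a3) = f (σ b3)
    rw [ea3, eb3, h2]


/-- With a nice coloring whose fibers all have ≥ 2 elements, three pairwise disjoint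
edges give villainy ≥ 3. -/
lemma disp_main (hopt : IsOptimalColoring G f) (hlt : ∀ v, f v < 3)
    (hfib2 : ∀ k, k < 3 → 2 ≤ (univ.filter fun v => f v = k).card)
    (a1 b1 a2 b2 a3 b3 : V)
    (he1 : G.Adj a1 b1) (he2 : G.Adj a2 b2) (he3 : G.Adj a3 b3)
    (d12 : a1 ≠ a2) (d13 : a1 ≠ b2) (d14 : a1 ≠ a3) (d15 : a1 ≠ b3)
    (d22 : b1 ≠ a2) (d23 : b1 ≠ b2) (d24 : b1 ≠ a3) (d25 : b1 ≠ b3)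
    (d33 : a2 ≠ a3) (d34 : a2 ≠ b3) (d43 : b2 ≠ a3) (d44 : b2 ≠ b3) :
    3 ≤ villainy G := by
  have hne1 : f a1 ≠ f b1 := hopt.1 he1
  have hne2 : f a2 ≠ f b2 := hopt.1 he2
  have hne3 : f a3 ≠ f b3 := hopt.1 he3
  have l1 := hlt a1; have l2 := hlt b1; have l3 := hlt a2
  have l4 := hlt b2; have l5 := hlt a3; have l6 := hlt b3
  by_cases hm12 : f a1 + f b1 = f a2 + f b2
  · have horient : (f a1 = f a2 ∧ f b1 = f b2) ∨ (f a1 = f b2 ∧ f b1 = f a2) := by omega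
    rcases horient with ⟨o1, o2⟩ | ⟨o1, o2⟩
    · exact disp_two_same G f hopt hlt hfib2 a1 b1 a2 b2 a3 b3 he1 he2 he3
        d12 d13 d14 d15 d22 d23 d24 d25 d33 d34 d43 d44 o1 o2
    · exact disp_two_same G f hopt hlt hfib2 a1 b1 b2 a2 a3 b3 he1 he2.symm he3
        d13 d12 d14 d15 d23 d22 d24 d25 d43 d44 d33 d34 o1 o2
  by_cases hm13 : f a1 + f b1 = f a3 + f b3
  · have horient : (f a1 = f a3 ∧ f b1 = f b3) ∨ (f a1 = f b3 ∧ f b1 = f a3) := by omega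
    rcases horient with ⟨o1, o2⟩ | ⟨o1, o2⟩
    · exact disp_two_same G f hopt hlt hfib2 a1 b1 a3 b3 a2 b2 he1 he3 he2
        d14 d15 d12 d13 d24 d25 d22 d23 d33.symm d43.symm d34.symm d44.symm o1 o2
    · exact disp_two_same G f hopt hlt hfib2 a1 b1 b3 a3 a2 b2 he1 he3.symm he2
        d15 d14 d12 d13 d25 d24 d22 d23 d34.symm d44.symm d33.symm d43.symm o1 o2
  by_cases hm23 : f a2 + f b2 = f a3 + f b3
  · have horient : (f a2 = f a3 ∧ f b2 = f b3) ∨ (f a2 = f b3 ∧ f b2 = f a3) := by omega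
    rcases horient with ⟨o1, o2⟩ | ⟨o1, o2⟩
    · exact disp_two_same G f hopt hlt hfib2 a2 b2 a3 b3 a1 b1 he2 he3 he1
        d33 d34 d12.symm d22.symm d43 d44 d13.symm d23.symm d14.symm d24.symm d15.symm d25.symm o1 o2
    · exact disp_two_same G f hopt hlt hfib2 a2 b2 b3 a3 a1 b1 he2 he3.symm he1
        d34 d33 d12.symm d22.symm d44 d43 d13.symm d23.symm d15.symm d25.symm d14.symm d24.symm o1 o2
  · -- all three color pairs distinct
    have hshare : f a1 = f a2 ∨ f a1 = f b2 ∨ f b1 = f a2 ∨ f b1 = f b2 := by omega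
    rcases hshare with hs | hs | hs | hs
    · have ho : (f a3 = f b1 ∧ f b3 = f b2) ∨ (f a3 = f b2 ∧ f b3 = f b1) := by omega
      rcases ho with ⟨o1, o2⟩ | ⟨o1, o2⟩
      · exact disp_all_diff G f hopt a1 b1 a2 b2 a3 b3 he1 he2 he3
          d12 d13 d14 d15 d22 d23 d24 d25 d33 d34 d43 d44 hs o1.symm o2.symm
      · exact disp_all_diff G f hopt a1 b1 a2 b2 b3 a3 he1 he2 he3.symm
          d12 d13 d15 d14 d22 d23 d25 d24 d34 d33 d44 d43 hs o2.symm o1.symm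
    · have ho : (f a3 = f b1 ∧ f b3 = f a2) ∨ (f a3 = f a2 ∧ f b3 = f b1) := by omega
      rcases ho with ⟨o1, o2⟩ | ⟨o1, o2⟩
      · exact disp_all_diff G f hopt a1 b1 b2 a2 a3 b3 he1 he2.symm he3
          d13 d12 d14 d15 d23 d22 d24 d25 d43 d44 d33 d34 hs o1.symm o2.symm
      · exact disp_all_diff G f hopt a1 b1 b2 a2 b3 a3 he1 he2.symm he3.symm
          d13 d12 d15 d14 d23 d22 d25 d24 d44 d43 d34 d33 hs o2.symm o1.symm
    · have ho : (f a3 = f a1 ∧ f b3 = f b2) ∨ (f a3 = f b2 ∧ f b3 = f a1) := by omega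
      rcases ho with ⟨o1, o2⟩ | ⟨o1, o2⟩
      · exact disp_all_diff G f hopt b1 a1 a2 b2 a3 b3 he1.symm he2 he3
          d22 d23 d24 d25 d12 d13 d14 d15 d33 d34 d43 d44 hs o1.symm o2.symm
      · exact disp_all_diff G f hopt b1 a1 a2 b2 b3 a3 he1.symm he2 he3.symm
          d22 d23 d25 d24 d12 d13 d15 d14 d34 d33 d44 d43 hs o2.symm o1.symm
    · have ho : (f a3 = f a1 ∧ f b3 = f a2) ∨ (f a3 = f a2 ∧ f b3 = f a1) := by omega
      rcases ho with ⟨o1, o2⟩ | ⟨o1, o2⟩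
      · exact disp_all_diff G f hopt b1 a1 b2 a2 a3 b3 he1.symm he2.symm he3
          d23 d22 d24 d25 d13 d12 d14 d15 d43 d44 d33 d34 hs o1.symm o2.symm
      · exact disp_all_diff G f hopt b1 a1 b2 a2 b3 a3 he1.symm he2.symm he3.symm
          d23 d22 d25 d24 d13 d12 d15 d14 d44 d43 d34 d33 hs o2.symm o1.symm

end Disp

section Struct

variable (G : SimpleGraph V)

lemma star_coloring_contra
    (hnot2 : ∀ g : V → ℕ, (∀ v, g v < 2) → ¬ IsProperColoring G g)
    (x : V) (hstar : ∀ u v, G.Adj u v → x = u ∨ x = v) : False := by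
  apply hnot2 (fun v => if v = x then 0 else 1) (by intro v; split <;> omega)
  intro u v huv
  rcases hstar u v huv with rfl | rfl
  · simp [huv.ne']
  · simp [huv.ne]

lemma exists_two_disjoint_edges
    (htri : ∀ a b c, G.Adj a b → G.Adj a c → G.Adj b c → False)
    (hnot2 : ∀ g : V → ℕ, (∀ v, g v < 2) → ¬ IsProperColoring G g) :
    ∃ p q r s, G.Adj p q ∧ G.Adj r s ∧ p ≠ r ∧ p ≠ s ∧ q ≠ r ∧ q ≠ s := by
  by_contra no2'
  push_neg at no2'
  have no2 : ∀ p q r s, G.Adj p q → G.Adj r s → p ≠ r → p ≠ s → q ≠ r → q = s := by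
    intro p q r s h1 h2 h3 h4 h5
    exact no2' p q r s h1 h2 h3 h4 h5
  have hedge : ∃ a b, G.Adj a b := by
    by_contra h
    push_neg at h
    exact hnot2 (fun _ => 0) (fun v => by show (0:ℕ) < 2; omega)
      (fun u v huv => (h u v huv).elim)
  obtain ⟨a, b, hab⟩ := hedge
  by_cases hstara : ∀ u v, G.Adj u v → a = u ∨ a = v
  · exact star_coloring_contra G hnot2 a hstara
  push_neg at hstara
  obtain ⟨c, d, hcd, hac, had⟩ := hstara
  -- an edge through b avoiding a
  have hbd' : ∃ d', G.Adj b d' ∧ a ≠ d' := by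
    by_cases hbc : b = c
    · exact ⟨d, hbc ▸ hcd, had⟩
    · have hbd := no2 a b c d hab hcd hac had hbc
      exact ⟨c, (hbd ▸ hcd).symm, hac⟩
  obtain ⟨d, hbd, had2⟩ := hbd'
  by_cases hstarb : ∀ u v, G.Adj u v → b = u ∨ b = v
  · exact star_coloring_contra G hnot2 b hstarb
  push_neg at hstarb
  obtain ⟨e, g, heg, hbe, hbg⟩ := hstarb
  by_cases hde : d = e
  · subst hde
    by_cases hag : a = g
    · subst hag
      exact htri a b d hab (heg.symm) hbd
    · have := no2 a b d g hab heg had2 hag (G.ne_of_adj hbd)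
      exact hbg this
  by_cases hdg : d = g
  · subst hdg
    by_cases hae : a = e
    · subst hae
      exact htri a b d hab heg hbd
    · have := no2 a b e d hab heg hae had2 hbe
      exact (G.ne_of_adj hbd) this
  · have := no2 b d e g hbd heg hbe hbg hde
    exact hdg this

end Struct

section Nu2

variable (G : SimpleGraph V)

lemma nu2 (hchi : chromNum G = 3) (hn : 7 ≤ Fintype.card V)
    (htri : ∀ a b c, G.Adj a b → G.Adj a c → G.Adj b c → False)
    (h3m : ∀ a1 b1 a2 b2 a3 b3 : V, G.Adj a1 b1 → G.Adj a2 b2 → G.Adj a3 b3 →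
      a1 ≠ a2 → a1 ≠ b2 → a1 ≠ a3 → a1 ≠ b3 → b1 ≠ a2 → b1 ≠ b2 → b1 ≠ a3 → b1 ≠ b3 →
      a2 ≠ a3 → a2 ≠ b3 → b2 ≠ a3 → b2 ≠ b3 → False)
    (p q r s : V) (hpq : G.Adj p q) (hrs : G.Adj r s)
    (dpr : p ≠ r) (dps : p ≠ s) (dqr : q ≠ r) (dqs : q ≠ s)
    (hKp : ∀ t, t ≠ p → t ≠ q → t ≠ r → t ≠ s → ¬ G.Adj t p) :
    3 ≤ villainy G := by
  obtain ⟨-, hnot2⟩ := chromNum_facts G hchi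
  -- outside vertices only connect into {q, r, s}
  have hKT : ∀ t, t ≠ p → t ≠ q → t ≠ r → t ≠ s → ∀ u, G.Adj t u →
      u = q ∨ u = r ∨ u = s := by
    intro t h1 h2 h3 h4 u hadj
    by_cases hup : u = p
    · exact absurd (hup ▸ hadj) (hKp t h1 h2 h3 h4)
    by_cases huq : u = q
    · exact Or.inl huq
    by_cases hur : u = r
    · exact Or.inr (Or.inl hur)
    by_cases hus : u = s
    · exact Or.inr (Or.inr hus)
    · exact (h3m t u p q r s hadj hpq hrs h1 h2 h3 h4 hup huq hur hus
        dpr dps dqr dqs).elim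
  -- choose colors for r and s
  obtain ⟨cr, cs, hcrlt, hcslt, hcr0, hcs0, hcrs, hcr2, hcs2, h2in⟩ :
      ∃ cr cs : ℕ, cr < 3 ∧ cs < 3 ∧ cr ≠ 0 ∧ cs ≠ 0 ∧ cr ≠ cs ∧
        (G.Adj q r → cr = 2) ∧ (G.Adj q s → cs = 2) ∧ (cr = 2 ∨ cs = 2) := by
    by_cases hqr : G.Adj q r
    · exact ⟨2, 1, by omega, by omega, by omega, by omega, by omega,
        fun _ => rfl, fun h => (htri q r s hqr h hrs).elim, Or.inl rfl⟩
    · exact ⟨1, 2, by omega, by omega, by omega, by omega, by omega,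
        fun h => absurd h hqr, fun _ => rfl, Or.inr rfl⟩
  set f : V → ℕ := fun v =>
    if v = p then 0 else if v = q then 1 else if v = r then cr else if v = s then cs else 0
    with hf
  have fp : f p = 0 := by simp [hf]
  have fq : f q = 1 := by simp [hf, hpq.ne']
  have fr : f r = cr := by simp [hf, dpr.symm, dqr.symm]
  have fs : f s = cs := by simp [hf, dps.symm, dqs.symm, hrs.ne']
  have ft : ∀ t, t ≠ p → t ≠ q → t ≠ r → t ≠ s → f t = 0 := by
    intro t h1 h2 h3 h4
    simp [hf, h1, h2, h3, h4]
  have hlt : ∀ v, f v < 3 := by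
    intro v
    by_cases h1 : v = p
    · rw [h1, fp]; omega
    by_cases h2 : v = q
    · rw [h2, fq]; omega
    by_cases h3 : v = r
    · rw [h3, fr]; omega
    by_cases h4 : v = s
    · rw [h4, fs]; omega
    · rw [ft v h1 h2 h3 h4]; omega
  have hproper : IsProperColoring G f := by
    intro u v huv
    by_cases h1 : u = p
    · subst h1
      rw [fp]
      by_cases h2 : v = q
      · rw [h2, fq]; omega
      by_cases h3 : v = r
      · rw [h3, fr]; omega
      by_cases h4 : v = s
      · rw [h4, fs]; omega
      · exact absurd huv.symm (hKp v huv.ne' h2 h3 h4)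
    by_cases h2 : u = q
    · subst h2
      rw [fq]
      by_cases h3 : v = p
      · rw [h3, fp]; omega
      by_cases h4 : v = r
      · rw [h4, fr, hcr2 (h4 ▸ huv)]; omega
      by_cases h5 : v = s
      · rw [h5, fs, hcs2 (h5 ▸ huv)]; omega
      · rw [ft v h3 huv.ne' h4 h5]; omega
    by_cases h3 : u = r
    · subst h3
      rw [fr]
      by_cases h4 : v = p
      · rw [h4, fp]; omega
      by_cases h5 : v = q
      · rw [h5, fq, hcr2 (h5 ▸ huv).symm]; omega
      by_cases h6 : v = s
      · rw [h6, fs]; omega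
      · rw [ft v h4 h5 huv.ne' h6]; omega
    by_cases h4 : u = s
    · subst h4
      rw [fs]
      by_cases h5 : v = p
      · rw [h5, fp]; omega
      by_cases h6 : v = q
      · rw [h6, fq, hcs2 (h6 ▸ huv).symm]; omega
      by_cases h7 : v = r
      · rw [h7, fr]; omega
      · rw [ft v h5 h6 h7 huv.ne']; omega
    · rw [ft u h1 h2 h3 h4]
      rcases hKT u h1 h2 h3 h4 v huv with h | h | h
      · rw [h, fq]; omega
      · rw [h, fr]; omega
      · rw [h, fs]; omega
  have hopt : IsOptimalColoring G f := by
    apply nice_isOptimal G hchi f hproper hlt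
    intro k hk
    interval_cases k
    · exact ⟨p, fp⟩
    · exact ⟨q, fq⟩
    · rcases h2in with h | h
      · exact ⟨r, by rw [fr, h]⟩
      · exact ⟨s, by rw [fs, h]⟩
  -- fiber 0 is big
  have hc4 : ({p, q, r, s} : Finset V).card = 4 := by
    rw [Finset.card_insert_of_notMem (by simp [hpq.ne, dpr, dps]),
      Finset.card_insert_of_notMem (by simp [dqr, dqs]),
      Finset.card_insert_of_notMem (by simp [hrs.ne]), Finset.card_singleton]
  have hbig : 4 ≤ (univ.filter fun v => f v = 0).card := by
    have hsub : insert p (univ \ {p, q, r, s}) ⊆ univ.filter fun v => f v = 0 := by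
      intro x hx
      rw [Finset.mem_insert] at hx
      rcases hx with rfl | hx
      · simp [fp]
      · rw [Finset.mem_sdiff] at hx
        have := hx.2
        simp only [Finset.mem_insert, Finset.mem_singleton] at this
        push_neg at this
        simp [ft x this.1 this.2.1 this.2.2.1 this.2.2.2]
    have hcard : (insert p (univ \ ({p, q, r, s} : Finset V))).card =
        (univ \ ({p, q, r, s} : Finset V)).card + 1 := by
      apply Finset.card_insert_of_notMem
      simp
    have hsd : (univ \ ({p, q, r, s} : Finset V)).card = Fintype.card V - 4 := by
      rw [Finset.card_sdiff_of_subset (Finset.subset_univ _), hc4, Finset.card_univ]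
    have := Finset.card_le_card hsub
    omega
  exact cons_pairs G f hopt 0 hbig p q r s hpq hrs dpr dps dqr dqs

end Nu2

lemma singleton_fix (G : SimpleGraph V) (f0 : V → ℕ)
    (hp0 : IsProperColoring G f0) (hlt0 : ∀ v, f0 v < 3)
    (w x : V) (hxw : x ≠ w) (hnadj : ¬ G.Adj w x)
    (hfibw : (univ.filter fun v => f0 v = f0 w) = {w})
    (hoth : ∀ k, k < 3 → k ≠ f0 w → 3 ≤ (univ.filter fun v => f0 v = k).card) :
    ∃ f1 : V → ℕ, IsProperColoring G f1 ∧ (∀ v, f1 v < 3) ∧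
      (∀ k, k < 3 → 2 ≤ (univ.filter fun v => f1 v = k).card) := by
  classical
  set f1 := Function.update f0 x (f0 w) with hf1
  have e_x : f1 x = f0 w := Function.update_self x (f0 w) f0
  have e_ne : ∀ v, v ≠ x → f1 v = f0 v := fun v hv => Function.update_of_ne hv (f0 w) f0
  refine ⟨f1, ?_, ?_, ?_⟩
  · intro u v huv
    by_cases hu : u = x
    · subst hu
      rw [e_x, e_ne v huv.ne']
      intro hcon
      have : v ∈ univ.filter fun t => f0 t = f0 w := by simp [hcon.symm]
      rw [hfibw, Finset.mem_singleton] at this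
      subst this
      exact hnadj huv.symm
    by_cases hv : v = x
    · subst hv
      rw [e_x, e_ne u hu]
      intro hcon
      have : u ∈ univ.filter fun t => f0 t = f0 w := by simp [hcon]
      rw [hfibw, Finset.mem_singleton] at this
      subst this
      exact hnadj huv
    · rw [e_ne u hu, e_ne v hv]
      exact hp0 huv
  · intro v
    by_cases hv : v = x
    · rw [hv, e_x]; exact hlt0 w
    · rw [e_ne v hv]; exact hlt0 v
  · intro k hk
    by_cases hkw : k = f0 w
    · subst hkw
      have hsub : ({w, x} : Finset V) ⊆ univ.filter fun v => f1 v = f0 w := by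
        intro t ht
        simp only [Finset.mem_insert, Finset.mem_singleton] at ht
        rcases ht with rfl | rfl
        · simp [e_ne t hxw.symm]
        · simp [e_x]
      have h2 : ({w, x} : Finset V).card = 2 := by
        rw [Finset.card_insert_of_notMem (by simp [hxw.symm]), Finset.card_singleton]
      calc 2 = ({w, x} : Finset V).card := h2.symm
        _ ≤ _ := Finset.card_le_card hsub
    · have hsub : (univ.filter fun v => f0 v = k).erase x ⊆
          univ.filter fun v => f1 v = k := by
        intro t ht
        rw [Finset.mem_erase] at ht
        obtain ⟨htx, htm⟩ := ht
        rw [Finset.mem_filter] at htm ⊢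
        exact ⟨htm.1, by rw [e_ne t htx]; exact htm.2⟩
      have h3 := hoth k hk hkw
      have := Finset.card_le_card hsub
      have := Finset.pred_card_le_card_erase (s := univ.filter fun v => f0 v = k) (a := x)
      omega

theorem villainy_ge_three_of_order_seven' (G : SimpleGraph V)
    (hn : 7 ≤ Fintype.card V) (hchi : chromNum G = 3) :
    3 ≤ villainy G := by
  classical
  obtain ⟨hcol3, hnot2⟩ := chromNum_facts G hchi
  obtain ⟨f0, hp0, hlt0, hfib0⟩ := exists_nice_coloring G hchi
  have hopt0 := nice_isOptimal G hchi f0 hp0 hlt0 hfib0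
  have hsum := fiber_sum f0 hlt0
  by_cases htri : ∃ a b c, G.Adj a b ∧ G.Adj a c ∧ G.Adj b c
  · obtain ⟨a, b, c, h1, h2, h3⟩ := htri
    have hbig : ∃ k, k < 3 ∧ 3 ≤ (univ.filter fun v => f0 v = k).card := by
      by_contra h
      push_neg at h
      have h0 := h 0 (by omega)
      have h1' := h 1 (by omega)
      have h2' := h 2 (by omega)
      omega
    obtain ⟨k, _, hk⟩ := hbig
    exact cons_triangle G f0 hopt0 k hk a b c h1 h2 h3
  · push_neg at htri
    have htri' : ∀ a b c, G.Adj a b → G.Adj a c → G.Adj b c → False :=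
      fun a b c x y z => htri a b c x y z
    by_cases h3m : ∃ a1 b1 a2 b2 a3 b3 : V, G.Adj a1 b1 ∧ G.Adj a2 b2 ∧ G.Adj a3 b3 ∧
        a1 ≠ a2 ∧ a1 ≠ b2 ∧ a1 ≠ a3 ∧ a1 ≠ b3 ∧ b1 ≠ a2 ∧ b1 ≠ b2 ∧ b1 ≠ a3 ∧ b1 ≠ b3 ∧
        a2 ≠ a3 ∧ a2 ≠ b3 ∧ b2 ≠ a3 ∧ b2 ≠ b3
    · obtain ⟨a1, b1, a2, b2, a3, b3, he1, he2, he3, d12, d13, d14, d15, d22, d23, d24,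
        d25, d33, d34, d43, d44⟩ := h3m
      by_cases hbig : ∃ k, k < 3 ∧ 4 ≤ (univ.filter fun v => f0 v = k).card
      · obtain ⟨k, _, hk⟩ := hbig
        exact cons_pairs G f0 hopt0 k hk a1 b1 a2 b2 he1 he2 d12 d13 d22 d23
      push_neg at hbig
      by_cases hmin : ∀ k, k < 3 → 2 ≤ (univ.filter fun v => f0 v = k).card
      · exact disp_main G f0 hopt0 hlt0 hmin a1 b1 a2 b2 a3 b3 he1 he2 he3
          d12 d13 d14 d15 d22 d23 d24 d25 d33 d34 d43 d44
      · push_neg at hmin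
        obtain ⟨k0, hk0lt, hk0card⟩ := hmin
        obtain ⟨w0, hw0⟩ := hfib0 k0 hk0lt
        have hk0pos : 1 ≤ (univ.filter fun v => f0 v = k0).card :=
          Finset.card_pos.mpr ⟨w0, by simp [hw0]⟩
        have hk0one : (univ.filter fun v => f0 v = k0).card = 1 := by omega
        obtain ⟨w, hw⟩ := Finset.card_eq_one.mp hk0one
        have hwmem : w ∈ univ.filter fun v => f0 v = k0 := by
          rw [hw]; exact Finset.mem_singleton_self w
        have hfw : f0 w = k0 := by simpa using hwmem
        have hfibw : (univ.filter fun v => f0 v = f0 w) = {w} := by rw [hfw, hw]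
        have hb0 := hbig 0 (by omega)
        have hb1 := hbig 1 (by omega)
        have hb2 := hbig 2 (by omega)
        have hoth : ∀ k, k < 3 → k ≠ f0 w → 3 ≤ (univ.filter fun v => f0 v = k).card := by
          intro k hk hkne
          have hfw3 : f0 w = 0 ∨ f0 w = 1 ∨ f0 w = 2 := by have := hlt0 w; omega
          have hcw1 : (univ.filter fun v => f0 v = f0 w).card = 1 := by
            rw [hfw]; exact hk0one
          rcases hfw3 with hfw' | hfw' | hfw' <;> rw [hfw'] at hcw1 hkne <;>
            interval_cases k <;> omega
        have hxex : ∃ x, x ≠ w ∧ ¬ G.Adj w x := by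
          by_contra hx
          push_neg at hx
          apply hnot2 (fun v => if v = w then 1 else 0)
            (fun v => by split <;> omega)
          intro u v huv
          by_cases hu : u = w
          · subst hu
            simp [huv.ne']
          by_cases hv : v = w
          · subst hv
            simp [hu]
          · exact (htri' w u v (hx u hu) (hx v hv) huv).elim
        obtain ⟨x, hxw, hnadj⟩ := hxex
        obtain ⟨f1, hp1, hlt1, hfib1⟩ := singleton_fix G f0 hp0 hlt0 w x hxw hnadj
          hfibw hoth
        have hopt1 : IsOptimalColoring G f1 := by
          apply nice_isOptimal G hchi f1 hp1 hlt1
          intro k hk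
          have := hfib1 k hk
          have hne : (univ.filter fun v => f1 v = k).Nonempty := by
            apply Finset.card_pos.mp; omega
          obtain ⟨v, hv⟩ := hne
          exact ⟨v, by simpa using hv⟩
        exact disp_main G f1 hopt1 hlt1 hfib1 a1 b1 a2 b2 a3 b3 he1 he2 he3
          d12 d13 d14 d15 d22 d23 d24 d25 d33 d34 d43 d44
    · push_neg at h3m
      have h3m' : ∀ a1 b1 a2 b2 a3 b3 : V, G.Adj a1 b1 → G.Adj a2 b2 → G.Adj a3 b3 →
          a1 ≠ a2 → a1 ≠ b2 → a1 ≠ a3 → a1 ≠ b3 → b1 ≠ a2 → b1 ≠ b2 → b1 ≠ a3 → b1 ≠ b3 →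
          a2 ≠ a3 → a2 ≠ b3 → b2 ≠ a3 → b2 ≠ b3 → False := by
        intro a1 b1 a2 b2 a3 b3 he1 he2 he3 d12 d13 d14 d15 d22 d23 d24 d25 d33 d34 d43 d44
        exact absurd d44 (by
          have := h3m a1 b1 a2 b2 a3 b3 he1 he2 he3 d12 d13 d14 d15 d22 d23 d24 d25 d33 d34 d43
          simpa using this)
      obtain ⟨p, q, r, s, hpq, hrs, dpr, dps, dqr, dqs⟩ :=
        exists_two_disjoint_edges G htri' hnot2
      have hKor : (∀ t, t ≠ p → t ≠ q → t ≠ r → t ≠ s → ¬ G.Adj t p) ∨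
          (∀ t, t ≠ p → t ≠ q → t ≠ r → t ≠ s → ¬ G.Adj t q) := by
        by_cases hA : ∀ t, t ≠ p → t ≠ q → t ≠ r → t ≠ s → ¬ G.Adj t p
        · exact Or.inl hA
        · push_neg at hA
          obtain ⟨t1, h11, h12, h13, h14, ht1p⟩ := hA
          right
          intro t2 h21 h22 h23 h24
          intro ht2q
          by_cases h12' : t1 = t2
          · subst h12'
            exact htri' t1 p q ht1p ht2q hpq
          · exact h3m' t1 p t2 q r s ht1p ht2q hrs h12' h12 h13 h14
              (fun h => h21 h.symm) hpq.ne dpr dps h23 h24 dqr dqs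
      rcases hKor with hK | hK
      · exact nu2 G hchi hn htri' h3m' p q r s hpq hrs dpr dps dqr dqs hK
      · exact nu2 G hchi hn htri' h3m' q p r s hpq.symm hrs dqr dqs dpr dps
          (fun t h1 h2 h3 h4 => hK t h2 h1 h3 h4)

end Aux

theorem villainy_ge_three_of_order_seven (G : SimpleGraph V)
    (hn : 7 ≤ Fintype.card V) (hchi : chromNum G = 3) :
    3 ≤ villainy G :=
  villainy_ge_three_of_order_seven' G hn hchi
end

section
/- The villainy of the disjoint union of three edges, K_2 + K_2 + K_2, is 2. -/
open Finset

variable {V : Type*}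

variable [Fintype V] [DecidableEq V]

section aux

abbrev V6 := (Fin 2 ⊕ Fin 2) ⊕ Fin 2
noncomputable abbrev G6 : SimpleGraph V6 :=
  ((⊤ : SimpleGraph (Fin 2)) ⊕g (⊤ : SimpleGraph (Fin 2))) ⊕g (⊤ : SimpleGraph (Fin 2))

abbrev w1 : V6 := Sum.inl (Sum.inl 0)
abbrev w2 : V6 := Sum.inl (Sum.inl 1)
abbrev w3 : V6 := Sum.inl (Sum.inr 0)
abbrev w4 : V6 := Sum.inl (Sum.inr 1)
abbrev w5 : V6 := Sum.inr 0
abbrev w6 : V6 := Sum.inr 1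

lemma adj12 : G6.Adj w1 w2 := by simp [SimpleGraph.sum_adj]
lemma adj34 : G6.Adj w3 w4 := by simp [SimpleGraph.sum_adj]
lemma adj56 : G6.Adj w5 w6 := by simp [SimpleGraph.sum_adj]

lemma card_filter_V6 (p : V6 → Prop) [DecidablePred p] :
    (univ.filter p).card = (if p w1 then 1 else 0) + (if p w2 then 1 else 0)
      + (if p w3 then 1 else 0) + (if p w4 then 1 else 0)
      + (if p w5 then 1 else 0) + (if p w6 then 1 else 0) := by
  rw [Finset.card_filter, Fintype.sum_sum_type, Fintype.sum_sum_type,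
    Fin.sum_univ_two, Fin.sum_univ_two, Fin.sum_univ_two]
  ring

end aux

lemma coreBool (g1 g2 g3 g4 g5 g6 : Bool)
    (h : cond g1 1 0 + cond g2 1 0 + cond g3 1 0 + cond g4 1 0 + cond g5 1 0 + cond g6 1 0 = 3) :
    ∃ h1 h2 h3 h4 h5 h6 : Bool, h1 ≠ h2 ∧ h3 ≠ h4 ∧ h5 ≠ h6 ∧
      cond h1 1 0 + cond h2 1 0 + cond h3 1 0 + cond h4 1 0 + cond h5 1 0 + cond h6 1 0 = 3 ∧
      (if g1 ≠ h1 then 1 else 0) + (if g2 ≠ h2 then 1 else 0) + (if g3 ≠ h3 then 1 else 0)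
        + (if g4 ≠ h4 then 1 else 0) + (if g5 ≠ h5 then 1 else 0) + (if g6 ≠ h6 then 1 else 0)
        ≤ 2 := by
  revert h
  revert g1 g2 g3 g4 g5 g6
  decide

lemma card_filter_comp {W : Type*} [Fintype W] [DecidableEq W] (c : W → ℕ) (σ : Equiv.Perm W)
    (k : ℕ) : (univ.filter fun v => c (σ v) = k).card = (univ.filter fun v => c v = k).card := by
  apply Finset.card_bij (fun v _ => σ v)
  · intro a ha; simp_all
  · intro a _ b _ h; exact σ.injective h
  · intro b hb
    refine ⟨σ.symm b, ?_, by simp⟩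
    simp only [mem_filter, mem_univ, true_and, Equiv.apply_symm_apply]
    simpa using hb

lemma sccOfPerm {W : Type*} [Fintype W] [DecidableEq W] (c : W → ℕ) (σ : Equiv.Perm W) :
    SameColorCounts (c ∘ σ) c := fun k => card_filter_comp c σ k

lemma not_scc_of_recolor_one {W : Type*} [Fintype W] [DecidableEq W] {c c' : W → ℕ}
    (h : recolorCount c c' = 1) : ¬ SameColorCounts c c' := by
  intro hs
  obtain ⟨v, hv⟩ := Finset.card_eq_one.mp h
  have hvmem : v ∈ univ.filter fun w => c w ≠ c' w := by rw [hv]; exact mem_singleton_self v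
  have hne : c v ≠ c' v := by simpa using hvmem
  have hagree : ∀ w, w ≠ v → c w = c' w := by
    intro w hw
    by_contra hcon
    have : w ∈ univ.filter fun w => c w ≠ c' w := by simpa using hcon
    rw [hv, mem_singleton] at this
    exact hw this
  have key : (univ.filter fun w => c w = c v) = insert v (univ.filter fun w => c' w = c v) := by
    ext w
    simp only [mem_filter, mem_univ, true_and, mem_insert]
    constructor
    · intro hw
      by_cases hwv : w = v
      · exact Or.inl hwv
      · exact Or.inr ((hagree w hwv).symm.trans hw)
    · rintro (rfl | hw)
      · rfl
      · by_cases hwv : w = v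
        · subst hwv; exact absurd hw (Ne.symm hne)
        · exact (hagree w hwv).trans hw
  have hnotmem : v ∉ univ.filter fun w => c' w = c v := by
    simp only [mem_filter, mem_univ, true_and]
    exact fun h => hne h.symm
  have := hs (c v)
  rw [key, Finset.card_insert_of_notMem hnotmem] at this
  omega

noncomputable def c2 : G6.Coloring (Fin 2) :=
  SimpleGraph.Coloring.mk (fun v => Sum.elim (Sum.elim id id) id v)
    (by intro u v h; rcases u with (u|u)|u <;> rcases v with (v|v)|v <;>
        simp_all [SimpleGraph.sum_adj])

lemma chrom6 : G6.chromaticNumber = 2 := by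
  refine le_antisymm ?_ ?_
  · exact_mod_cast c2.colorable.chromaticNumber_le
  · by_contra h
    push_neg at h
    have h1 : G6.chromaticNumber ≤ 1 := Order.le_of_lt_add_one (by exact_mod_cast h)
    rw [show ((1:ℕ∞)) = ((1:ℕ):ℕ∞) by norm_num,
      SimpleGraph.chromaticNumber_le_iff_colorable] at h1
    obtain ⟨C⟩ := h1
    exact C.valid adj12 (Subsingleton.elim _ _)

lemma chromNum6 : chromNum G6 = 2 := by
  rw [chromNum, chrom6]; rfl

lemma properIff (c : V6 → ℕ) :
    IsProperColoring G6 c ↔ (c w1 ≠ c w2 ∧ c w3 ≠ c w4 ∧ c w5 ≠ c w6) := by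
  constructor
  · intro h; exact ⟨h adj12, h adj34, h adj56⟩
  · rintro ⟨p, q, r⟩ u v huv
    rcases u with (u|u)|u <;> rcases v with (v|v)|v <;>
      simp only [SimpleGraph.sum_adj, SimpleGraph.top_adj] at huv <;>
      fin_cases u <;> fin_cases v <;> simp_all [w1, w2, w3, w4, w5, w6] <;> omega

lemma condEq {a b k : ℕ} (x : Bool) :
    (if (cond x a b) = k then 1 else 0) = cond x (if a = k then 1 else 0) (if b = k then 1 else 0) := by
  cases x <;> rfl

lemma condNeCond {a b : ℕ} (hab : a ≠ b) (x y : Bool) :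
    ((cond x a b) ≠ (cond y a b)) ↔ x ≠ y := by
  cases x <;> cases y <;> simp [hab, Ne.symm hab]

lemma condSplit (p q : ℕ) (x : Bool) : cond x p q = (cond x 1 0) * p + (cond x 0 1) * q := by
  cases x <;> simp

lemma sumCond (P Q : ℕ) (x1 x2 x3 x4 x5 x6 : Bool)
    (hx : cond x1 1 0 + cond x2 1 0 + cond x3 1 0 + cond x4 1 0 + cond x5 1 0 + cond x6 1 0 = 3) :
    cond x1 P Q + cond x2 P Q + cond x3 P Q + cond x4 P Q + cond x5 P Q + cond x6 P Q
      = 3 * P + 3 * Q := by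
  have h0 : cond x1 0 1 + cond x2 0 1 + cond x3 0 1 + cond x4 0 1 + cond x5 0 1 + cond x6 0 1
      = 3 := by
    have c1 : cond x1 1 0 + cond x1 0 1 = 1 := by cases x1 <;> rfl
    have c2 : cond x2 1 0 + cond x2 0 1 = 1 := by cases x2 <;> rfl
    have c3 : cond x3 1 0 + cond x3 0 1 = 1 := by cases x3 <;> rfl
    have c4 : cond x4 1 0 + cond x4 0 1 = 1 := by cases x4 <;> rfl
    have c5 : cond x5 1 0 + cond x5 0 1 = 1 := by cases x5 <;> rfl
    have c6 : cond x6 1 0 + cond x6 0 1 = 1 := by cases x6 <;> rfl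
    omega
  calc cond x1 P Q + cond x2 P Q + cond x3 P Q + cond x4 P Q + cond x5 P Q + cond x6 P Q
      = (cond x1 1 0) * P + (cond x1 0 1) * Q + ((cond x2 1 0) * P + (cond x2 0 1) * Q)
        + ((cond x3 1 0) * P + (cond x3 0 1) * Q) + ((cond x4 1 0) * P + (cond x4 0 1) * Q)
        + ((cond x5 1 0) * P + (cond x5 0 1) * Q) + ((cond x6 1 0) * P + (cond x6 0 1) * Q) := by
        rw [← condSplit, ← condSplit, ← condSplit, ← condSplit, ← condSplit, ← condSplit]
    _ = (cond x1 1 0 + cond x2 1 0 + cond x3 1 0 + cond x4 1 0 + cond x5 1 0 + cond x6 1 0) * P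
        + (cond x1 0 1 + cond x2 0 1 + cond x3 0 1 + cond x4 0 1 + cond x5 0 1 + cond x6 0 1) * Q := by
        ring
    _ = 3 * P + 3 * Q := by rw [hx, h0]

def mk6 (x1 x2 x3 x4 x5 x6 : ℕ) : V6 → ℕ :=
  Sum.elim (Sum.elim ![x1, x2] ![x3, x4]) ![x5, x6]

lemma mk6_w1 {x1 x2 x3 x4 x5 x6 : ℕ} : mk6 x1 x2 x3 x4 x5 x6 w1 = x1 := rfl
lemma mk6_w2 {x1 x2 x3 x4 x5 x6 : ℕ} : mk6 x1 x2 x3 x4 x5 x6 w2 = x2 := rfl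
lemma mk6_w3 {x1 x2 x3 x4 x5 x6 : ℕ} : mk6 x1 x2 x3 x4 x5 x6 w3 = x3 := rfl
lemma mk6_w4 {x1 x2 x3 x4 x5 x6 : ℕ} : mk6 x1 x2 x3 x4 x5 x6 w4 = x4 := rfl
lemma mk6_w5 {x1 x2 x3 x4 x5 x6 : ℕ} : mk6 x1 x2 x3 x4 x5 x6 w5 = x5 := rfl
lemma mk6_w6 {x1 x2 x3 x4 x5 x6 : ℕ} : mk6 x1 x2 x3 x4 x5 x6 w6 = x6 := rfl

lemma upper (f : V6 → ℕ) (σ : Equiv.Perm V6) (hf : IsOptimalColoring G6 f) :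
    colVillainy G6 (f ∘ σ) ≤ 2 := by
  obtain ⟨hprop, hcard⟩ := hf
  rw [chromNum6] at hcard
  have hab : f w1 ≠ f w2 := hprop adj12
  set a := f w1 with ha
  set b := f w2 with hb
  have himg : ({a, b} : Finset ℕ) = univ.image f := by
    apply Finset.eq_of_subset_of_card_le
    · intro k hk
      simp only [Finset.mem_insert, Finset.mem_singleton] at hk
      rcases hk with rfl | rfl
      · exact Finset.mem_image_of_mem f (mem_univ w1)
      · exact Finset.mem_image_of_mem f (mem_univ w2)
    · rw [hcard, Finset.card_pair hab]
  have hmem : ∀ v, f v = a ∨ f v = b := by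
    intro v
    have hv : f v ∈ univ.image f := Finset.mem_image_of_mem f (mem_univ v)
    rw [← himg] at hv
    simpa using hv
  have h34 : f w3 ≠ f w4 := hprop adj34
  have h56 : f w5 ≠ f w6 := hprop adj56
  have countA : (univ.filter fun v => f v = a).card = 3 := by
    rw [card_filter_V6]
    rcases hmem w3 with h3 | h3 <;> rcases hmem w4 with h4 | h4 <;>
      rcases hmem w5 with h5 | h5 <;> rcases hmem w6 with h6 | h6 <;>
      simp_all [(Ne.symm hab : f w2 ≠ f w1)]
  have countA' : (univ.filter fun v => (f ∘ σ) v = a).card = 3 :=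
    (sccOfPerm f σ a).trans countA
  have L : ∀ v, ∃ x : Bool, f (σ v) = cond x a b := by
    intro v
    rcases hmem (σ v) with h | h
    · exact ⟨true, h⟩
    · exact ⟨false, h⟩
  obtain ⟨g1, e1⟩ := L w1
  obtain ⟨g2, e2⟩ := L w2
  obtain ⟨g3, e3⟩ := L w3
  obtain ⟨g4, e4⟩ := L w4
  obtain ⟨g5, e5⟩ := L w5
  obtain ⟨g6, e6⟩ := L w6
  have hsum : cond g1 1 0 + cond g2 1 0 + cond g3 1 0 + cond g4 1 0 + cond g5 1 0
      + cond g6 1 0 = 3 := by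
    rw [card_filter_V6] at countA'
    simp only [Function.comp_apply, e1, e2, e3, e4, e5, e6, condEq] at countA'
    simpa [Ne.symm hab] using countA'
  obtain ⟨h1, h2, h3, h4, h5, h6, hne12, hne34, hne56, hcnt, hdiff⟩ :=
    coreBool g1 g2 g3 g4 g5 g6 hsum
  set c' : V6 → ℕ := mk6 (cond h1 a b) (cond h2 a b) (cond h3 a b) (cond h4 a b)
    (cond h5 a b) (cond h6 a b) with hc'
  have hp : IsProperColoring G6 c' := by
    rw [properIff, hc', mk6_w1, mk6_w2, mk6_w3, mk6_w4, mk6_w5, mk6_w6]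
    exact ⟨(condNeCond hab _ _).mpr hne12, (condNeCond hab _ _).mpr hne34,
      (condNeCond hab _ _).mpr hne56⟩
  have hs : SameColorCounts (f ∘ σ) c' := by
    intro k
    rw [card_filter_V6, card_filter_V6]
    simp only [Function.comp_apply, e1, e2, e3, e4, e5, e6, hc', mk6_w1, mk6_w2, mk6_w3,
      mk6_w4, mk6_w5, mk6_w6, condEq]
    rw [sumCond _ _ _ _ _ _ _ _ hsum, sumCond _ _ _ _ _ _ _ _ hcnt]
  have hrc : recolorCount (f ∘ σ) c' ≤ 2 := by
    rw [recolorCount, card_filter_V6]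
    simp only [Function.comp_apply, e1, e2, e3, e4, e5, e6, hc', mk6_w1, mk6_w2, mk6_w3,
      mk6_w4, mk6_w5, mk6_w6, ne_eq, condNeCond hab]
    simpa using hdiff
  calc colVillainy G6 (f ∘ σ) ≤ recolorCount (f ∘ σ) c' := Nat.sInf_le ⟨c', hp, hs, rfl⟩
    _ ≤ 2 := hrc

noncomputable def f0 : V6 → ℕ := mk6 0 1 0 1 0 1
noncomputable def σ0 : Equiv.Perm V6 := Equiv.swap w2 w3

lemma c0vals : (f0 ∘ σ0) w1 = 0 ∧ (f0 ∘ σ0) w2 = 0 ∧ (f0 ∘ σ0) w3 = 1 ∧ (f0 ∘ σ0) w4 = 1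
    ∧ (f0 ∘ σ0) w5 = 0 ∧ (f0 ∘ σ0) w6 = 1 := by
  simp [f0, σ0, Equiv.swap_apply_of_ne_of_ne, Equiv.swap_apply_left, Equiv.swap_apply_right,
    mk6, Matrix.cons_val_zero, Matrix.cons_val_one]

lemma f0opt : IsOptimalColoring G6 f0 := by
  constructor
  · rw [properIff]
    refine ⟨?_, ?_, ?_⟩ <;> simp [f0, mk6]
  · rw [chromNum6]
    have : univ.image f0 = {0, 1} := by
      apply Finset.eq_of_subset_of_card_le
      · intro k hk
        simp only [Finset.mem_image, mem_univ, true_and] at hk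
        obtain ⟨v, rfl⟩ := hk
        rcases v with (v|v)|v <;> fin_cases v <;> simp [f0, mk6]
      · apply Finset.card_le_card
        intro k hk
        simp only [Finset.mem_insert, Finset.mem_singleton] at hk
        rcases hk with rfl | rfl
        · exact Finset.mem_image_of_mem f0 (mem_univ w1)
        · exact Finset.mem_image_of_mem f0 (mem_univ w2)
    rw [this]
    decide

lemma colv0 : colVillainy G6 (f0 ∘ σ0) = 2 := by
  obtain ⟨d1, d2, d3, d4, d5, d6⟩ := c0vals
  have hrc2 : recolorCount (f0 ∘ σ0) f0 = 2 := by
    rw [recolorCount, card_filter_V6]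
    simp only [Function.comp_apply] at d1 d2 d3 d4 d5 d6 ⊢
    simp only [d1, d2, d3, d4, d5, d6]
    norm_num [f0, mk6_w1, mk6_w2, mk6_w3, mk6_w4, mk6_w5, mk6_w6]
  have mem2 : 2 ∈ {n | ∃ c', IsProperColoring G6 c' ∧ SameColorCounts (f0 ∘ σ0) c'
      ∧ recolorCount (f0 ∘ σ0) c' = n} :=
    ⟨f0, f0opt.1, sccOfPerm f0 σ0, hrc2⟩
  have bound : ∀ n ∈ {n | ∃ c', IsProperColoring G6 c' ∧ SameColorCounts (f0 ∘ σ0) c'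
      ∧ recolorCount (f0 ∘ σ0) c' = n}, 2 ≤ n := by
    rintro n ⟨c', hp', hs', rfl⟩
    have h0 : recolorCount (f0 ∘ σ0) c' ≠ 0 := by
      intro h
      rw [recolorCount, Finset.card_eq_zero] at h
      have hall : ∀ v, (f0 ∘ σ0) v = c' v := by
        intro v
        by_contra hcon
        have : v ∈ univ.filter fun v => (f0 ∘ σ0) v ≠ c' v := by simpa using hcon
        rw [h] at this
        exact absurd this (Finset.notMem_empty v)
      have : c' w1 = c' w2 := by rw [← hall w1, ← hall w2, d1, d2]
      exact hp' adj12 this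
    have h1 : recolorCount (f0 ∘ σ0) c' ≠ 1 := by
      intro h
      exact not_scc_of_recolor_one h hs'
    omega
  exact le_antisymm (Nat.sInf_le mem2) (le_csInf ⟨2, mem2⟩ bound)

theorem villainy_three_K2 :
    villainy (((⊤ : SimpleGraph (Fin 2)) ⊕g (⊤ : SimpleGraph (Fin 2)))
      ⊕g (⊤ : SimpleGraph (Fin 2))) = 2 := by
  have mem2T : (2:ℕ) ∈ {n | ∃ f c, IsOptimalColoring G6 f ∧ IsPermutationOf c f
      ∧ colVillainy G6 c = n} := ⟨f0, f0 ∘ σ0, f0opt, ⟨σ0, rfl⟩, colv0⟩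
  have bdd : ∀ n ∈ {n | ∃ f c, IsOptimalColoring G6 f ∧ IsPermutationOf c f
      ∧ colVillainy G6 c = n}, n ≤ 2 := by
    rintro n ⟨f, c, hopt, ⟨σ, rfl⟩, rfl⟩
    exact upper f σ hopt
  exact le_antisymm (csSup_le ⟨2, mem2T⟩ bdd) (le_csSup ⟨2, bdd⟩ mem2T)
end
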